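/- If (A_{αβ})_{α,β=1,…,n} is a positive semidefinite n×n block matrix whose blocks A_{αβ} are m×m complex matrices, then the n×n scalar matrix (det A_{αβ})_{α,β=1,…,n} is positive semidefinite. -/

import Mathlib

open Matrix
open scoped ComplexOrder

section Aux
open Equiv Finset

variable {κ : Type*} [Fintype κ] [DecidableEq κ] {m : ℕ}

lemma L1 (E D : Matrix κ (Fin m) ℂ) :
    det (Eᵀ * D) = ∑ f : Fin m → κ, det (E.submatrix f id) * ∏ i, D (f i) i := by
  rw [det_apply']
  simp_rw [mul_apply, transpose_apply, Fintype.prod_sum, mul_sum]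
  rw [Finset.sum_comm]
  refine Finset.sum_congr rfl fun f _ => ?_
  simp_rw [prod_mul_distrib, ← mul_assoc]
  rw [← Finset.sum_mul]
  congr 1
  rw [← det_transpose, det_apply']
  simp [transpose_apply, submatrix_apply]

lemma L2 (E D : Matrix κ (Fin m) ℂ) :
    ∑ f : Fin m → κ, det (E.submatrix f id) * det (D.submatrix f id)
      = (m.factorial : ℂ) * ∑ f : Fin m → κ, det (E.submatrix f id) * ∏ i, D (f i) i := by
  have key : ∀ τ : Perm (Fin m), ∀ g : Fin m → κ,
      det (E.submatrix g id) * ∏ i, D (g i) i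
        = (Perm.sign τ : ℂ) * (det (E.submatrix (g ∘ ⇑τ⁻¹) id) * ∏ i, D ((g ∘ ⇑τ⁻¹) (τ i)) i) := by
    intro τ g
    have h1 : E.submatrix (g ∘ ⇑τ⁻¹) id = (E.submatrix g id).submatrix (⇑τ⁻¹) id := rfl
    have h2 : ∀ i, (g ∘ ⇑τ⁻¹) (τ i) = g i := by intro i; simp
    rw [h1, det_permute]
    simp only [h2]
    rw [show ((Perm.sign τ⁻¹ : ℤ) : ℂ) * (E.submatrix g id).det * ∏ i, D (g i) i
      = ((Perm.sign τ⁻¹ : ℤ) : ℂ) * ((E.submatrix g id).det * ∏ i, D (g i) i) from by ring,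
      ← mul_assoc, ← Int.cast_mul, Perm.sign_inv, ← Units.val_mul, Int.units_mul_self]
    simp
  calc ∑ f : Fin m → κ, det (E.submatrix f id) * det (D.submatrix f id)
      = ∑ f : Fin m → κ, ∑ τ : Perm (Fin m),
          (Perm.sign τ : ℂ) * (det (E.submatrix f id) * ∏ i, D (f (τ i)) i) := by
        refine Finset.sum_congr rfl fun f _ => ?_
        rw [det_apply' (D.submatrix f id), Finset.mul_sum]
        refine Finset.sum_congr rfl fun τ _ => ?_
        simp only [submatrix_apply, id]
        ring
    _ = ∑ τ : Perm (Fin m), ∑ f : Fin m → κ,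
          (Perm.sign τ : ℂ) * (det (E.submatrix f id) * ∏ i, D (f (τ i)) i) := Finset.sum_comm
    _ = ∑ τ : Perm (Fin m), ∑ f : Fin m → κ, det (E.submatrix f id) * ∏ i, D (f i) i := by
        refine Finset.sum_congr rfl fun τ _ =>
          (Fintype.sum_equiv (Equiv.arrowCongr τ (Equiv.refl κ)) _ _ fun g => ?_).symm
        simpa [Equiv.arrowCongr, Function.comp] using key τ g
    _ = (m.factorial : ℂ) * ∑ f : Fin m → κ, det (E.submatrix f id) * ∏ i, D (f i) i := by
        rw [Finset.sum_const, Finset.card_univ, Fintype.card_perm, nsmul_eq_mul, Fintype.card_fin]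

lemma CB (C D : Matrix κ (Fin m) ℂ) :
    (m.factorial : ℂ) * det (Cᴴ * D)
      = ∑ f : Fin m → κ, star (det (C.submatrix f id)) * det (D.submatrix f id) := by
  have hC : Cᴴ = (C.map (starRingEnd ℂ))ᵀ := rfl
  have hdet : ∀ f : Fin m → κ,
      det ((C.map (starRingEnd ℂ)).submatrix f id) = star (det (C.submatrix f id)) := by
    intro f
    have : (C.map (starRingEnd ℂ)).submatrix f id = (C.submatrix f id).map (starRingEnd ℂ) := rfl
    rw [this]
    rw [show (C.submatrix f id).map ⇑(starRingEnd ℂ) = (starRingEnd ℂ).mapMatrix (C.submatrix f id) from rfl,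
      ← RingHom.map_det]
    rfl
  rw [hC, L1, ← L2]
  exact Finset.sum_congr rfl fun f _ => by rw [hdet]

theorem stmt10_aux (m n : ℕ) (A : Fin n → Fin n → Matrix (Fin m) (Fin m) ℂ)
    (hA : (Matrix.of fun p q : Fin n × Fin m => A p.1 q.1 p.2 q.2).PosSemidef) :
    (Matrix.of fun α β : Fin n => (A α β).det).PosSemidef := by
  obtain ⟨B, hB⟩ : ∃ B : Matrix (Fin n × Fin m) (Fin n × Fin m) ℂ,
      (Matrix.of fun p q : Fin n × Fin m => A p.1 q.1 p.2 q.2) = Bᴴ * B := by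
    open scoped MatrixOrder in
    obtain ⟨B, hB⟩ := CStarAlgebra.nonneg_iff_eq_star_mul_self.mp hA.nonneg
    exact ⟨B, hB⟩
  set N : Fin n → Matrix (Fin n × Fin m) (Fin m) ℂ :=
    fun α => Matrix.of fun k p => B k (α, p) with hN
  have hAN : ∀ α β, A α β = (N α)ᴴ * N β := by
    intro α β
    ext p q
    have := congrFun (congrFun hB (α, p)) (β, q)
    simpa [mul_apply, hN] using this
  set G : Matrix (Fin m → Fin n × Fin m) (Fin n) ℂ :=
    Matrix.of fun f α => det ((N α).submatrix f id) with hG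
  have hMain : (m.factorial : ℂ) • (Matrix.of fun α β : Fin n => (A α β).det) = Gᴴ * G := by
    ext α β
    simp only [Matrix.smul_apply, of_apply, smul_eq_mul, mul_apply, conjTranspose_apply, hG]
    rw [hAN α β, CB]
  have hc : (m.factorial : ℂ) ≠ 0 := by
    exact_mod_cast (Nat.factorial_pos m).ne'
  have hP := posSemidef_conjTranspose_mul_self G
  rw [← hMain] at hP
  constructor
  · have h1 := hP.1
    rw [IsHermitian, conjTranspose_smul, star_natCast] at h1
    exact smul_right_injective _ hc h1
  · intro x
    have h2 := hP.2 x
    have e2 : (x.sum fun i xi => x.sum fun j xj =>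
        star xi * ((m.factorial : ℂ) • of fun α β => (A α β).det) i j * xj)
        = (m.factorial : ℂ) * (x.sum fun i xi => x.sum fun j xj =>
          star xi * of (fun α β => (A α β).det) i j * xj) := by
      simp only [Finsupp.mul_sum, Matrix.smul_apply, smul_eq_mul]
      refine Finset.sum_congr rfl fun i _ => Finset.sum_congr rfl fun j _ => ?_
      ring
    rw [e2] at h2
    have hinv : (0:ℂ) ≤ (m.factorial : ℂ)⁻¹ := by
      have e : Complex.ofReal ((m.factorial : ℝ)⁻¹) = ((m.factorial : ℂ))⁻¹ := by push_cast; ring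
      rw [← e, Complex.zero_le_real]
      positivity
    have := mul_nonneg hinv h2
    rwa [← mul_assoc, inv_mul_cancel₀ hc, one_mul] at this

end Aux

/-- A block matrix `(A_{αβ})` with `m×m` complex entries is positive semidefinite
if the corresponding `mn×mn` matrix is positive semidefinite. -/
def IsPosSemidefBlock {m n : ℕ} (A : Fin n → Fin n → Matrix (Fin m) (Fin m) ℂ) : Prop :=
  (Matrix.of fun p q : Fin n × Fin m => A p.1 q.1 p.2 q.2).PosSemidef

theorem stmt10 (m n : ℕ) (A : Fin n → Fin n → Matrix (Fin m) (Fin m) ℂ)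
    (hA : IsPosSemidefBlock A) :
    (Matrix.of fun α β : Fin n => (A α β).det).PosSemidef :=
  stmt10_aux m n A hA
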